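/- Let A ∈ ℂ^{m×n}, W ∈ ℂ^{n×m}, and let k = ind(A,W). Then there exists X ∈ ℂ^{m×n} satisfying AWXWA = A, XWAWX = X, (WAWX)* = WAWX, and XW(AW)^{k+1} = (AW)^k (i.e., A has a {1',2',3',1^{k}'}-inverse) if and only if rank(WAW) = rank(A). -/

import Mathlib

open Matrix

/-- The index of a square complex matrix: the smallest nonnegative integer `k` with
`rank (M ^ k) = rank (M ^ (k + 1))`. -/
noncomputable def matIndex {p : ℕ} (M : Matrix (Fin p) (Fin p) ℂ) : ℕ :=
  sInf {k : ℕ | (M ^ k).rank = (M ^ (k + 1)).rank}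

/-- The weighted index `ind(A, W) = max (ind (A * W)) (ind (W * A))`. -/
noncomputable def wIndex {m n : ℕ} (A : Matrix (Fin m) (Fin n) ℂ)
    (W : Matrix (Fin n) (Fin m) ℂ) : ℕ :=
  max (matIndex (A * W)) (matIndex (W * A))

lemma aux_exists_mul_eq {p q r : ℕ} {M : Matrix (Fin p) (Fin q) ℂ} {N : Matrix (Fin p) (Fin r) ℂ}
    (h : LinearMap.range N.mulVecLin ≤ LinearMap.range M.mulVecLin) :
    ∃ C : Matrix (Fin q) (Fin r) ℂ, M * C = N := by
  have hcol : ∀ j : Fin r, ∃ x : Fin q → ℂ, M.mulVec x = fun i => N i j := by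
    intro j
    have hmem : (fun i => N i j) ∈ LinearMap.range N.mulVecLin := by
      refine ⟨Pi.single j 1, ?_⟩
      simp [Matrix.mulVecLin_apply]
      rfl
    obtain ⟨x, hx⟩ := h hmem
    exact ⟨x, hx⟩
  choose x hx using hcol
  refine ⟨Matrix.of (fun i j => x j i), ?_⟩
  ext i j
  have := congrFun (hx j) i
  simpa [Matrix.mul_apply, Matrix.mulVec, dotProduct] using this

lemma aux_exists_mul_eq' {p q r : ℕ} {M : Matrix (Fin q) (Fin p) ℂ} {N : Matrix (Fin r) (Fin p) ℂ}
    (h : LinearMap.range Nᵀ.mulVecLin ≤ LinearMap.range Mᵀ.mulVecLin) :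
    ∃ D : Matrix (Fin r) (Fin q) ℂ, D * M = N := by
  obtain ⟨C, hC⟩ := aux_exists_mul_eq h
  refine ⟨Cᵀ, ?_⟩
  have h2 := congrArg Matrix.transpose hC
  rwa [Matrix.transpose_mul, Matrix.transpose_transpose, Matrix.transpose_transpose] at h2

lemma aux_range_mul_le {p q r : ℕ} (M : Matrix (Fin p) (Fin q) ℂ) (N : Matrix (Fin q) (Fin r) ℂ) :
    LinearMap.range (M * N).mulVecLin ≤ LinearMap.range M.mulVecLin := by
  rw [Matrix.mulVecLin_mul]
  exact LinearMap.range_comp_le_range _ _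

lemma aux_rank_def {p q : ℕ} (M : Matrix (Fin p) (Fin q) ℂ) :
    M.rank = Module.finrank ℂ (LinearMap.range M.mulVecLin) := rfl

lemma aux_range_eq {p q r : ℕ} (M : Matrix (Fin p) (Fin q) ℂ) (N : Matrix (Fin q) (Fin r) ℂ)
    (h : M.rank ≤ (M * N).rank) :
    LinearMap.range (M * N).mulVecLin = LinearMap.range M.mulVecLin :=
  Submodule.eq_of_le_of_finrank_le (aux_range_mul_le M N) h

lemma aux_index_nonempty {p : ℕ} (M : Matrix (Fin p) (Fin p) ℂ) :
    {k : ℕ | (M ^ k).rank = (M ^ (k + 1)).rank}.Nonempty := by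
  by_contra h
  rw [Set.not_nonempty_iff_eq_empty] at h
  have hne : ∀ k : ℕ, (M ^ k).rank ≠ (M ^ (k + 1)).rank := by
    intro k hkk
    exact absurd (h ▸ hkk : k ∈ (∅ : Set ℕ)) (Set.notMem_empty k)
  have key : ∀ k : ℕ, (M ^ k).rank + k ≤ p := by
    intro k
    induction k with
    | zero => simpa using Matrix.rank_le_width (M ^ 0)
    | succ k ih =>
      have h1 : (M ^ (k + 1)).rank ≤ (M ^ k).rank := by
        rw [pow_succ]; exact Matrix.rank_mul_le_left _ _
      have h2 := hne k
      omega
  have := key (p + 1)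
  omega

lemma aux_rank_pow_succ {p : ℕ} (M : Matrix (Fin p) (Fin p) ℂ) {j : ℕ}
    (h : (M ^ j).rank = (M ^ (j + 1)).rank) :
    (M ^ (j + 1)).rank = (M ^ (j + 2)).rank := by
  have hle : LinearMap.range (M ^ (j + 1)).mulVecLin ≤ LinearMap.range (M ^ j).mulVecLin := by
    rw [pow_succ, Matrix.mulVecLin_mul]
    exact LinearMap.range_comp_le_range _ _
  have heq : LinearMap.range (M ^ (j + 1)).mulVecLin = LinearMap.range (M ^ j).mulVecLin :=
    Submodule.eq_of_le_of_finrank_le hle (le_of_eq h)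
  have e2 : LinearMap.range (M ^ (j + 2)).mulVecLin = LinearMap.range (M ^ (j + 1)).mulVecLin := by
    have p1 : M ^ (j + 2) = M * M ^ (j + 1) := pow_succ' M (j + 1)
    have p2 : M ^ (j + 1) = M * M ^ j := pow_succ' M j
    calc LinearMap.range (M ^ (j + 2)).mulVecLin
        = Submodule.map M.mulVecLin (LinearMap.range (M ^ (j + 1)).mulVecLin) := by
          rw [p1, Matrix.mulVecLin_mul, LinearMap.range_comp]
      _ = Submodule.map M.mulVecLin (LinearMap.range (M ^ j).mulVecLin) := by rw [heq]
      _ = LinearMap.range (M ^ (j + 1)).mulVecLin := by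
          rw [p2, Matrix.mulVecLin_mul, LinearMap.range_comp]
  rw [aux_rank_def, aux_rank_def, e2]

lemma aux_matIndex_spec {p : ℕ} (M : Matrix (Fin p) (Fin p) ℂ) {j : ℕ} (hj : matIndex M ≤ j) :
    (M ^ j).rank = (M ^ (j + 1)).rank := by
  induction j, hj using Nat.le_induction with
  | base => exact Nat.sInf_mem (aux_index_nonempty M)
  | succ j hj ih => exact aux_rank_pow_succ M ih

open scoped ComplexOrder in
lemma aux_13inv {p q : ℕ} (B : Matrix (Fin p) (Fin q) ℂ) :
    ∃ G : Matrix (Fin q) (Fin p) ℂ, (B * G)ᴴ = B * G ∧ B * G * B = B := by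
  have h3 : Bᴴ.rank ≤ (Bᴴ * B).rank := by
    rw [Matrix.rank_conjTranspose_mul_self, Matrix.rank_conjTranspose]
  obtain ⟨G, hG⟩ := aux_exists_mul_eq (aux_range_eq Bᴴ B h3).ge
  have hG2 : Gᴴ * (Bᴴ * B) = B := by
    have h := congrArg Matrix.conjTranspose hG
    simp only [Matrix.conjTranspose_mul, Matrix.conjTranspose_conjTranspose, Matrix.mul_assoc] at h
    exact h
  have hBGherm : B * G = Gᴴ * Bᴴ := by
    conv_lhs => rw [← hG2]
    rw [Matrix.mul_assoc, hG]
  refine ⟨G, ?_, ?_⟩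
  · rw [hBGherm, Matrix.conjTranspose_mul, Matrix.conjTranspose_conjTranspose,
      Matrix.conjTranspose_conjTranspose, ← hBGherm]
  · rw [hBGherm, Matrix.mul_assoc, hG2]

lemma aux_main {m n : ℕ} (A X0 G : Matrix (Fin m) (Fin n) ℂ) (W : Matrix (Fin n) (Fin m) ℂ)
    (k : ℕ)
    (R1 : A * (W * (G * (W * A))) = A)
    (R3 : (W * (A * (W * G)))ᴴ = W * (A * (W * G)))
    (R4 : X0 * (W * (A * W) ^ (k + 1)) = (A * W) ^ k) :
    ∃ X : Matrix (Fin m) (Fin n) ℂ,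
        A * W * X * W * A = A ∧
        X * W * A * W * X = X ∧
        (W * A * W * X)ᴴ = W * A * W * X ∧
        X * W * (A * W) ^ (k + 1) = (A * W) ^ k := by
  have R2 : ∀ (r : ℕ) (Z : Matrix (Fin n) (Fin r) ℂ),
      A * (W * (G * (W * (A * Z)))) = A * Z := by
    intro r Z
    have h := congrArg (fun Y => Y * Z) R1
    simp only [Matrix.mul_assoc] at h
    exact h
  have R6 : ∀ (r : ℕ) (Z : Matrix (Fin m) (Fin r) ℂ),
      W * (A * (W * (G * (W * (A * (W * Z)))))) = W * (A * (W * Z)) := by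
    intro r Z
    exact congrArg (fun Y => W * Y) (R2 r (W * Z))
  set U : Matrix (Fin m) (Fin m) ℂ := 1 - G * (W * (A * W)) with hU
  set X' : Matrix (Fin m) (Fin n) ℂ := G + U * X0 with hX'
  have S0 : ∀ (r : ℕ) (Z : Matrix (Fin m) (Fin r) ℂ), A * (W * (U * Z)) = 0 := by
    intro r Z
    rw [hU]
    simp only [Matrix.sub_mul, Matrix.one_mul, Matrix.mul_sub, Matrix.mul_assoc]
    rw [R2 r (W * Z), sub_self]
  have S1 : ∀ (r : ℕ) (Z : Matrix (Fin n) (Fin r) ℂ),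
      A * (W * (X' * Z)) = A * (W * (G * Z)) := by
    intro r Z
    rw [hX']
    simp only [Matrix.add_mul, Matrix.mul_add, Matrix.mul_assoc]
    rw [S0 r (X0 * Z), add_zero]
  have S1b : A * (W * X') = A * (W * G) := by
    rw [hX']
    simp only [Matrix.mul_add]
    rw [S0 n X0, add_zero]
  have S3 : ∀ (r : ℕ) (Z : Matrix (Fin n) (Fin r) ℂ),
      W * (A * (W * (X' * Z))) = W * (A * (W * (G * Z))) := by
    intro r Z
    exact congrArg (fun Y => W * Y) (S1 r Z)
  have S3b : W * (A * (W * X')) = W * (A * (W * G)) :=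
    congrArg (fun Y => W * Y) S1b
  have R5 : W * (A * W) ^ (k + 1) = W * (A * (W * (A * W) ^ k)) := by
    rw [pow_succ']
    simp only [Matrix.mul_assoc]
  have S6 : X' * (W * (A * W) ^ (k + 1)) = (A * W) ^ k := by
    rw [hX']
    simp only [Matrix.add_mul, Matrix.mul_assoc]
    rw [R4, hU]
    simp only [Matrix.sub_mul, Matrix.one_mul, Matrix.mul_assoc]
    rw [R5]
    abel
  refine ⟨X' * (W * (A * (W * X'))), ?_, ?_, ?_, ?_⟩
  · -- A * W * X * W * A = A
    have T1 : A * (W * (X' * (W * A))) = A := by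
      rw [S1 n (W * A)]; exact R1
    simp only [Matrix.mul_assoc]
    rw [T1, T1]
  · -- X * W * A * W * X = X
    simp only [Matrix.mul_assoc]
    simp only [S3, S3b]
    simp only [R6]
  · -- (W * A * W * X)ᴴ = W * A * W * X
    simp only [Matrix.mul_assoc]
    simp only [S3, S3b]
    simp only [R6]
    exact R3
  · -- X * W * (A * W) ^ (k + 1) = (A * W) ^ k
    simp only [Matrix.mul_assoc]
    rw [S6, ← R5, S6]

/-- for `k = ind(A, W)`, `A` has a `{1',2',3',1^k'}`-inverse iff
`rank (W * A * W) = rank A`. -/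
theorem stmt6 (m n : ℕ) (A : Matrix (Fin m) (Fin n) ℂ) (W : Matrix (Fin n) (Fin m) ℂ)
    (k : ℕ) (hk : k = wIndex A W) :
    (∃ X : Matrix (Fin m) (Fin n) ℂ,
        A * W * X * W * A = A ∧
        X * W * A * W * X = X ∧
        (W * A * W * X)ᴴ = W * A * W * X ∧
        X * W * (A * W) ^ (k + 1) = (A * W) ^ k) ↔
      (W * A * W).rank = A.rank := by
  constructor
  · rintro ⟨X, h1, h2, -, -⟩
    have hle1 : (W * A * W).rank ≤ A.rank :=
      le_trans (Matrix.rank_mul_le_left (W * A) W) (Matrix.rank_mul_le_right W A)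
    have hle2 : A.rank ≤ X.rank := by
      conv_lhs => rw [← h1]
      calc (A * W * X * W * A).rank ≤ (A * W * X * W).rank := Matrix.rank_mul_le_left _ _
        _ ≤ (A * W * X).rank := Matrix.rank_mul_le_left _ _
        _ ≤ X.rank := Matrix.rank_mul_le_right _ _
    have hle3 : X.rank ≤ (W * A * W).rank := by
      conv_lhs => rw [← h2]
      calc (X * W * A * W * X).rank ≤ (X * W * A * W).rank := Matrix.rank_mul_le_left _ _
        _ = (X * (W * A * W)).rank := by congr 1; simp only [Matrix.mul_assoc]
        _ ≤ (W * A * W).rank := Matrix.rank_mul_le_right _ _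
    omega
  · intro hrank
    -- rank facts
    have hrW : (W * A * W).rank ≤ (A * W).rank := by
      have h := Matrix.rank_mul_le_right W (A * W)
      have e : W * (A * W) = W * A * W := by simp only [Matrix.mul_assoc]
      rwa [e] at h
    -- C1 with A * W * C1 = A
    obtain ⟨C1, hC1⟩ : ∃ C1 : Matrix (Fin m) (Fin n) ℂ, (A * W) * C1 = A :=
      aux_exists_mul_eq (aux_range_eq A W (hrank ▸ hrW)).ge
    -- D1 with D1 * (W * A) = A
    have hrWA : (W * A * W).rank ≤ (W * A).rank := Matrix.rank_mul_le_left (W * A) W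
    have h2 : Aᵀ.rank ≤ (Aᵀ * Wᵀ).rank := by
      rw [← Matrix.transpose_mul, Matrix.rank_transpose, Matrix.rank_transpose]
      exact hrank ▸ hrWA
    obtain ⟨D1, hD1⟩ : ∃ D1 : Matrix (Fin m) (Fin n) ℂ, D1 * (W * A) = A := by
      apply aux_exists_mul_eq'
      rw [Matrix.transpose_mul]
      exact (aux_range_eq Aᵀ Wᵀ h2).ge
    -- G : a {1,3}-type inverse of W*A*W
    obtain ⟨G, hBG, hBGB⟩ := aux_13inv (W * A * W)
    -- X0 with X0 * (W * (A*W)^(k+1)) = (A*W)^k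
    have hkAW : matIndex (A * W) ≤ k := hk ▸ le_max_left _ _
    have e1 : ((A * W) ^ k).rank = ((A * W) ^ (k + 1)).rank := aux_matIndex_spec _ hkAW
    have e2 : ((A * W) ^ (k + 1)).rank = ((A * W) ^ (k + 2)).rank :=
      aux_matIndex_spec (A * W) (le_trans hkAW (Nat.le_succ k))
    obtain ⟨X0, hX0⟩ : ∃ X0 : Matrix (Fin m) (Fin n) ℂ,
        X0 * (W * (A * W) ^ (k + 1)) = (A * W) ^ k := by
      apply aux_exists_mul_eq'
      have hfac : ((A * W) ^ (k + 2))ᵀ = (W * (A * W) ^ (k + 1))ᵀ * Aᵀ := by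
        rw [← Matrix.transpose_mul]
        rw [pow_succ', Matrix.mul_assoc]
      have s1 : LinearMap.range ((A * W) ^ (k + 2))ᵀ.mulVecLin ≤
          LinearMap.range (W * (A * W) ^ (k + 1))ᵀ.mulVecLin := by
        rw [hfac]
        exact aux_range_mul_le _ _
      have s2 : (W * (A * W) ^ (k + 1))ᵀ.rank ≤ ((A * W) ^ (k + 2))ᵀ.rank := by
        rw [Matrix.rank_transpose, Matrix.rank_transpose, ← e2]
        exact Matrix.rank_mul_le_right _ _
      have eqM : LinearMap.range ((A * W) ^ (k + 2))ᵀ.mulVecLin =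
          LinearMap.range (W * (A * W) ^ (k + 1))ᵀ.mulVecLin :=
        Submodule.eq_of_le_of_finrank_le s1 s2
      have hfac2 : ((A * W) ^ (k + 2))ᵀ = ((A * W) ^ k)ᵀ * ((A * W) ^ 2)ᵀ := by
        rw [← Matrix.transpose_mul]
        rw [show k + 2 = 2 + k from by omega, pow_add]
      have s4 : LinearMap.range ((A * W) ^ (k + 2))ᵀ.mulVecLin ≤
          LinearMap.range ((A * W) ^ k)ᵀ.mulVecLin := by
        rw [hfac2]
        exact aux_range_mul_le _ _
      have s5 : ((A * W) ^ k)ᵀ.rank ≤ ((A * W) ^ (k + 2))ᵀ.rank := by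
        rw [Matrix.rank_transpose, Matrix.rank_transpose, ← e2, ← e1]
      have eq4 : LinearMap.range ((A * W) ^ (k + 2))ᵀ.mulVecLin =
          LinearMap.range ((A * W) ^ k)ᵀ.mulVecLin :=
        Submodule.eq_of_le_of_finrank_le s4 s5
      exact (eq4.symm.trans eqM).le
    -- normalized hypotheses
    have nC1 : A * (W * C1) = A := by
      have h := hC1; simp only [Matrix.mul_assoc] at h; exact h
    have nBGB : W * (A * (W * (G * (W * (A * W))))) = W * (A * W) := by
      have h := hBGB; simp only [Matrix.mul_assoc] at h; exact h
    have hD1cont : ∀ (r : ℕ) (Z : Matrix (Fin n) (Fin r) ℂ),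
        D1 * (W * (A * Z)) = A * Z := by
      intro r Z
      have h := congrArg (fun Y => Y * Z) hD1
      simp only [Matrix.mul_assoc] at h
      exact h
    have R1 : A * (W * (G * (W * A))) = A := by
      have h := congrArg (fun Y => D1 * Y) nBGB
      have h2 := congrArg (fun Y => Y * C1) h
      simp only [Matrix.mul_assoc] at h2
      rw [nC1] at h2
      rw [hD1cont] at h2
      rw [hD1] at h2
      exact h2
    have R3 : (W * (A * (W * G)))ᴴ = W * (A * (W * G)) := by
      have h := hBG; simp only [Matrix.mul_assoc] at h; exact h
    exact aux_main A X0 G W k R1 R3 hX0
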